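/- Let M ∈ EuclideanSpace ℝ (Fin 3), R > 0, let N = closedBall(M, R), let u be a unit vector and 0 < h ≤ R. Define the spherical cap C = {x ∈ N : ⟪u, x − M⟫ ≥ R − h} and the smaller cap C₁ = {x ∈ N : ⟪u, x − M⟫ ≥ R − h/2}. Let P ⊆ N \ C be a finite nonempty set of points and let A ∈ C. Then the center c of a smallest enclosing ball of P ∪ {A} does not lie in C₁, i.e. ⟪u, c − M⟫ < R − h/2. -/

import Mathlib

open Metric
open scoped RealInnerProductSpace

/-- `closedBall c r` is a smallest enclosing ball of `P`: it contains `P` and every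
closed ball containing `P` has radius at least `r`. -/
def IsSEB {E : Type*} [NormedAddCommGroup E] [InnerProductSpace ℝ E]
    (P : Set E) (c : E) (r : ℝ) : Prop :=
  P ⊆ closedBall c r ∧ ∀ c' r', P ⊆ closedBall c' r' → r ≤ r'

set_option maxHeartbeats 1000000 in
theorem stmt6 (M : EuclideanSpace ℝ (Fin 3)) (R : ℝ) (hR : 0 < R)
    (u : EuclideanSpace ℝ (Fin 3)) (hu : ‖u‖ = 1) (h : ℝ) (hh : 0 < h) (hhR : h ≤ R)
    (C : Set (EuclideanSpace ℝ (Fin 3)))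
    (hC : C = {x ∈ closedBall M R | ⟪u, x - M⟫ ≥ R - h})
    (P : Finset (EuclideanSpace ℝ (Fin 3))) (hP : P.Nonempty)
    (hPN : ↑P ⊆ closedBall M R \ C)
    (A : EuclideanSpace ℝ (Fin 3)) (hA : A ∈ C)
    (c : EuclideanSpace ℝ (Fin 3)) (r : ℝ)
    (hSEB : IsSEB (↑P ∪ {A}) c r) :
    ⟪u, c - M⟫ < R - h / 2 := by
  classical
  have hAC : A ∈ closedBall M R ∧ ⟪u, A - M⟫ ≥ R - h := by rw [hC] at hA; exact hA
  have hPy : ∀ p ∈ P, ⟪u, p - M⟫ < R - h := by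
    intro p hp
    obtain ⟨hpb, hpc⟩ := hPN hp
    by_contra hge
    exact hpc (by rw [hC]; exact ⟨hpb, le_of_not_gt hge⟩)
  have hAnotP : A ∉ P := fun hh' => (hPN hh').2 hA
  set Q : Finset (EuclideanSpace ℝ (Fin 3)) := insert A P with hQdef
  have hQne : Q.Nonempty := ⟨A, Finset.mem_insert_self _ _⟩
  have hQsub : ∀ x ∈ Q, dist x c ≤ r := by
    intro x hx
    have hx' : x ∈ (↑P ∪ {A} : Set _) := by
      rw [Set.union_singleton]
      exact_mod_cast hx
    exact mem_closedBall.mp (hSEB.1 hx')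
  have hmin : ∀ c' r', (∀ x ∈ Q, dist x c' ≤ r') → r ≤ r' := by
    intro c' r' hr'
    apply hSEB.2 c' r'
    rw [Set.union_singleton]
    intro x hx
    have hxQ : x ∈ Q := by exact_mod_cast hx
    exact mem_closedBall.mpr (hr' x hxQ)
  have lem1 : ∀ c', ∃ x ∈ Q, r ≤ dist x c' := by
    intro c'
    obtain ⟨x, hx, hmax⟩ := Q.exists_max_image (fun y => dist y c') hQne
    exact ⟨x, hx, hmin c' (dist x c') (fun y hy => hmax y hy)⟩
  obtain ⟨p₀, hp₀⟩ := hP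
  have hrpos : 0 < r := by
    have h1 : dist p₀ c ≤ r := hQsub p₀ (Finset.mem_insert_of_mem hp₀)
    have h2 : dist A c ≤ r := hQsub A (Finset.mem_insert_self _ _)
    have h3 : p₀ ≠ A := fun he => hAnotP (he ▸ hp₀)
    have h4 : 0 < dist p₀ A := dist_pos.mpr h3
    have h5 : dist p₀ A ≤ dist p₀ c + dist c A := dist_triangle _ _ _
    rw [dist_comm c A] at h5
    linarith
  set T : Finset (EuclideanSpace ℝ (Fin 3)) := Q.filter (fun x => dist x c = r) with hTdef
  have hTQ : ∀ x ∈ T, x ∈ Q := fun x hx => (Finset.mem_filter.mp hx).1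
  have hTr : ∀ x ∈ T, dist x c = r := fun x hx => (Finset.mem_filter.mp hx).2
  have hTne : T.Nonempty := by
    obtain ⟨x, hx, hxr⟩ := lem1 c
    exact ⟨x, Finset.mem_filter.mpr ⟨hx, le_antisymm (hQsub x hx) hxr⟩⟩
  -- The center lies in the convex hull of the contact points.
  have hchull : c ∈ convexHull ℝ (↑T : Set (EuclideanSpace ℝ (Fin 3))) := by
    by_contra hc
    obtain ⟨f, s, hf1, hf2⟩ := geometric_hahn_banach_closed_point
      (convex_convexHull ℝ _) ((T.finite_toSet.isCompact_convexHull (𝕜 := ℝ)).isClosed) hc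
    obtain ⟨d, hd⟩ : ∃ d, ∀ y, ⟪d, y⟫ = f y :=
      ⟨(InnerProductSpace.toDual ℝ _).symm f, fun y =>
        InnerProductSpace.toDual_symm_apply⟩
    set e : EuclideanSpace ℝ (Fin 3) := -d with hedef
    have hmargin : ∀ x ∈ T, 0 < ⟪e, x - c⟫ := by
      intro x hx
      have h1 : f x < s := hf1 x (subset_convexHull ℝ _ (by exact_mod_cast hx))
      have h2 : ⟪d, x⟫ < ⟪d, c⟫ := by rw [hd, hd]; linarith
      have h3 : ⟪e, x - c⟫ = ⟪d, c⟫ - ⟪d, x⟫ := by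
        rw [hedef]
        rw [inner_neg_left, inner_sub_right]
        ring
      rw [h3]; linarith
    have hene : e ≠ 0 := by
      obtain ⟨x, hx⟩ := hTne
      intro h0
      have h1 := hmargin x hx
      rw [h0] at h1
      simp at h1
    have hepos : (0:ℝ) < ‖e‖ := norm_pos_iff.mpr hene
    set F : EuclideanSpace ℝ (Fin 3) → ℝ := fun x =>
      if dist x c = r then ⟪e, x - c⟫ / ‖e‖ ^ 2 else (r - dist x c) / (2 * ‖e‖) with hFdef
    have hFpos : ∀ x ∈ Q, 0 < F x := by
      intro x hx
      by_cases hxr : dist x c = r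
      · have hm := hmargin x (Finset.mem_filter.mpr ⟨hx, hxr⟩)
        rw [hFdef]
        simp only [if_pos hxr]
        positivity
      · have hxlt : dist x c < r := lt_of_le_of_ne (hQsub x hx) hxr
        rw [hFdef]
        simp only [if_neg hxr]
        have : 0 < r - dist x c := by linarith
        positivity
    set ε : ℝ := Q.inf' hQne F with hεdef
    have hεpos : 0 < ε := by
      rw [hεdef, Finset.lt_inf'_iff]
      exact hFpos
    have hεle : ∀ x ∈ Q, ε ≤ F x := fun x hx => Finset.inf'_le _ hx
    have hlt : ∀ x ∈ Q, dist x (c + ε • e) < r := by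
      intro x hx
      by_cases hxr : dist x c = r
      · have hm := hmargin x (Finset.mem_filter.mpr ⟨hx, hxr⟩)
        have hFx : F x = ⟪e, x - c⟫ / ‖e‖ ^ 2 := by rw [hFdef]; simp only [if_pos hxr]
        have hεx : ε * ‖e‖ ^ 2 ≤ ⟪e, x - c⟫ := by
          have h1 := hεle x hx
          rw [hFx] at h1
          have he2 : (0:ℝ) < ‖e‖ ^ 2 := by positivity
          rw [le_div_iff₀ he2] at h1
          exact h1
        have hnorm : dist x (c + ε • e) ^ 2 =
            r ^ 2 - 2 * (ε * ⟪e, x - c⟫) + ε ^ 2 * ‖e‖ ^ 2 := by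
          rw [dist_eq_norm]
          have h1 : x - (c + ε • e) = (x - c) - ε • e := by
            rw [sub_add_eq_sub_sub]
          rw [h1, norm_sub_sq_real, norm_smul, real_inner_smul_right]
          have h2 : ‖x - c‖ = r := by rw [← dist_eq_norm]; exact hxr
          rw [h2, real_inner_comm, mul_pow, Real.norm_eq_abs, abs_of_pos hεpos]
          try ring
        have hd2 : dist x (c + ε • e) ^ 2 < r ^ 2 := by
          rw [hnorm]
          nlinarith
        nlinarith [dist_nonneg (x := x) (y := c + ε • e)]
      · have hxlt : dist x c < r := lt_of_le_of_ne (hQsub x hx) hxr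
        have hFx : F x = (r - dist x c) / (2 * ‖e‖) := by rw [hFdef]; simp only [if_neg hxr]
        have h1 := hεle x hx
        rw [hFx] at h1
        have htri : dist x (c + ε • e) ≤ dist x c + ε * ‖e‖ := by
          have h2 := dist_triangle x c (c + ε • e)
          have h3 : dist c (c + ε • e) = ε * ‖e‖ := by
            rw [dist_eq_norm]
            simp [norm_smul, abs_of_pos hεpos]
          linarith
        have h4 : ε * ‖e‖ ≤ (r - dist x c) / 2 := by
          rw [le_div_iff₀ (by positivity : (0:ℝ) < 2 * ‖e‖)] at h1
          nlinarith
        linarith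
    obtain ⟨x, hx, hxr⟩ := lem1 (c + ε • e)
    exact absurd hxr (not_le.mpr (hlt x hx))
  rw [Finset.convexHull_eq] at hchull
  obtain ⟨w, hw0, hw1, hwc⟩ := hchull
  have hcsum : ∑ x ∈ T, w x • x = c := by
    rw [Finset.centerMass_eq_of_sum_1 _ id hw1] at hwc
    simpa using hwc
  have hzero : ∑ x ∈ T, w x • (x - c) = 0 := by
    have h1 : ∑ x ∈ T, w x • (x - c) = (∑ x ∈ T, w x • x) - (∑ x ∈ T, w x) • c := by
      rw [Finset.sum_smul, ← Finset.sum_sub_distrib]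
      exact Finset.sum_congr rfl (fun x _ => smul_sub _ _ _)
    rw [h1, hcsum, hw1, one_smul, sub_self]
  have hinner0 : ∑ x ∈ T, w x * ⟪x - c, A - c⟫ = 0 := by
    have h1 : ∑ x ∈ T, w x * ⟪x - c, A - c⟫ = ∑ x ∈ T, ⟪w x • (x - c), A - c⟫ :=
      Finset.sum_congr rfl (fun x _ => (real_inner_smul_left _ _ _).symm)
    rw [h1, ← sum_inner, hzero, inner_zero_left]
  have hAcr : ‖A - c‖ ≤ r := by
    rw [← dist_eq_norm]; exact hQsub A (Finset.mem_insert_self _ _)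
  have hbound : ∀ x ∈ T.erase A, -(w x * (r * r)) ≤ w x * ⟪x - c, A - c⟫ := by
    intro x hx
    have hxT := Finset.mem_of_mem_erase hx
    have h1 : |⟪x - c, A - c⟫| ≤ ‖x - c‖ * ‖A - c‖ := abs_real_inner_le_norm _ _
    have h2 : ‖x - c‖ = r := by rw [← dist_eq_norm]; exact hTr x hxT
    have h3 : -(r * r) ≤ ⟪x - c, A - c⟫ := by
      have := neg_abs_le ⟪x - c, A - c⟫
      nlinarith [norm_nonneg (A - c)]
    have h4 := hw0 x hxT
    nlinarith
  have hcM : c - M = ∑ x ∈ T, w x • (x - M) := by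
    have h1 : ∑ x ∈ T, w x • (x - M) = (∑ x ∈ T, w x • x) - (∑ x ∈ T, w x) • M := by
      rw [Finset.sum_smul, ← Finset.sum_sub_distrib]
      exact Finset.sum_congr rfl (fun x _ => smul_sub _ _ _)
    rw [h1, hcsum, hw1, one_smul]
  have ht : ⟪u, c - M⟫ = ∑ x ∈ T, w x * ⟪u, x - M⟫ := by
    rw [hcM, inner_sum]
    exact Finset.sum_congr rfl (fun x _ => real_inner_smul_right _ _ _)
  have hAisR : ⟪u, A - M⟫ ≤ R := by
    have h1 : ⟪u, A - M⟫ ≤ ‖u‖ * ‖A - M‖ := real_inner_le_norm _ _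
    have h2 : ‖A - M‖ ≤ R := by rw [← dist_eq_norm]; exact mem_closedBall.mp hAC.1
    rw [hu, one_mul] at h1
    linarith
  have hTP : ∀ x ∈ T, x ≠ A → ⟪u, x - M⟫ < R - h := by
    intro x hx hxA
    have hxQ := hTQ x hx
    have hxP : x ∈ P := by
      rcases Finset.mem_insert.mp hxQ with h' | h'
      · exact absurd h' hxA
      · exact h'
    exact hPy x hxP
  by_cases hAT : A ∈ T
  · -- A is a contact point
    have hsum' : ∑ x ∈ T.erase A, w x = 1 - w A := by
      have h1 := Finset.add_sum_erase T w hAT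
      linarith
    have hAr : ⟪A - c, A - c⟫ = r * r := by
      rw [real_inner_self_eq_norm_mul_norm]
      have h2 : ‖A - c‖ = r := by rw [← dist_eq_norm]; exact hTr A hAT
      rw [h2]
    have hsplit : w A * ⟪A - c, A - c⟫ + ∑ x ∈ T.erase A, w x * ⟪x - c, A - c⟫ = 0 := by
      rw [Finset.add_sum_erase T (fun x => w x * ⟪x - c, A - c⟫) hAT]
      exact hinner0
    have hle : -((1 - w A) * (r * r)) ≤ ∑ x ∈ T.erase A, w x * ⟪x - c, A - c⟫ := by
      calc -((1 - w A) * (r * r))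
          = -((∑ x ∈ T.erase A, w x) * (r * r)) := by rw [hsum']
        _ = ∑ x ∈ T.erase A, -(w x * (r * r)) := by
            rw [Finset.sum_mul, Finset.sum_neg_distrib]
        _ ≤ ∑ x ∈ T.erase A, w x * ⟪x - c, A - c⟫ := Finset.sum_le_sum hbound
    have hneg : w A * (r * r) ≤ (1 - w A) * (r * r) := by
      rw [hAr] at hsplit
      linarith
    have hlamhalf : w A ≤ 1 / 2 := by nlinarith [hneg, mul_pos hrpos hrpos]
    have hwA0 : 0 ≤ w A := hw0 A hAT
    have herasepos : ∃ x ∈ T.erase A, 0 < w x := by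
      by_contra hno
      push_neg at hno
      have h1 : ∑ x ∈ T.erase A, w x = 0 :=
        Finset.sum_eq_zero (fun x hx =>
          le_antisymm (hno x hx) (hw0 x (Finset.mem_of_mem_erase hx)))
      rw [hsum'] at h1
      nlinarith
    have hsumlt : ∑ x ∈ T.erase A, w x * ⟪u, x - M⟫ < (1 - w A) * (R - h) := by
      have h1 : ∑ x ∈ T.erase A, w x * ⟪u, x - M⟫ < ∑ x ∈ T.erase A, w x * (R - h) := by
        obtain ⟨x₁, hx₁, hwx₁⟩ := herasepos
        apply Finset.sum_lt_sum
        · intro i hi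
          have hw' := hw0 i (Finset.mem_of_mem_erase hi)
          have := hTP i (Finset.mem_of_mem_erase hi) (Finset.ne_of_mem_erase hi)
          nlinarith
        · refine ⟨x₁, hx₁, ?_⟩
          have := hTP x₁ (Finset.mem_of_mem_erase hx₁) (Finset.ne_of_mem_erase hx₁)
          nlinarith
      rw [← Finset.sum_mul, hsum'] at h1
      exact h1
    have hsplitT : ∑ x ∈ T, w x * ⟪u, x - M⟫ =
        w A * ⟪u, A - M⟫ + ∑ x ∈ T.erase A, w x * ⟪u, x - M⟫ :=
      (Finset.add_sum_erase T (fun x => w x * ⟪u, x - M⟫) hAT).symm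
    rw [ht, hsplitT]
    have hfin1 : w A * ⟪u, A - M⟫ ≤ w A * R :=
      mul_le_mul_of_nonneg_left hAisR hwA0
    nlinarith [mul_nonneg (by linarith : (0:ℝ) ≤ 1/2 - w A) hh.le]
  · -- A is not a contact point: all contact points lie in P
    have hexpos : ∃ x ∈ T, 0 < w x := by
      by_contra hno
      push_neg at hno
      have h1 : ∑ x ∈ T, w x = 0 :=
        Finset.sum_eq_zero (fun x hx => le_antisymm (hno x hx) (hw0 x hx))
      rw [hw1] at h1
      norm_num at h1
    have h1 : ∑ x ∈ T, w x * ⟪u, x - M⟫ < ∑ x ∈ T, w x * (R - h) := by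
      obtain ⟨x₁, hx₁, hwx₁⟩ := hexpos
      apply Finset.sum_lt_sum
      · intro i hi
        have hw' := hw0 i hi
        have := hTP i hi (fun he => hAT (he ▸ hi))
        nlinarith
      · refine ⟨x₁, hx₁, ?_⟩
        have := hTP x₁ hx₁ (fun he => hAT (he ▸ hx₁))
        nlinarith
    rw [← Finset.sum_mul, hw1, one_mul] at h1
    rw [ht]
    linarith
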